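/- Fix γ > 0. For every ε > 0 and every f ∈ E, there exists δ > 0 such that for every g ∈ E with ρ_1(f,g) < δ one has d_E(f,g) < ε. (That is, the identity map from (E, ρ_1) to (E, d_E) is continuous.) -/

import Mathlib

open MeasureTheory Set Filter
open scoped ENNReal Topology

/-- The `L^p` distance of two functions over the interval `[a, b]`. -/
noncomputable def rho (a b : ℝ) (p : ℝ≥0∞) (f g : ℝ → ℝ) : ℝ :=
  (eLpNorm (fun x => f x - g x) p (volume.restrict (Icc a b))).toReal

/-- A sequence taking values in `{0, 1}`. -/
def IsBinary (a : ℕ → ℝ) : Prop := ∀ n, a n = 0 ∨ a n = 1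

/-- The function `x ↦ Σ aₙ/n! xⁿ` attached to a coefficient sequence; elements of `E`
are exactly the functions `fseq a` with `a` binary. -/
noncomputable def fseq (a : ℕ → ℝ) : ℝ → ℝ :=
  fun x => ∑' n : ℕ, a n / (Nat.factorial n : ℝ) * x ^ n

/-- The metric `d_E` on `E`, expressed via the coefficient sequences:
`d_E(f, g) = Σₙ |aₙ − bₙ|/(n+1)!`. -/
noncomputable def dE (a b : ℕ → ℝ) : ℝ :=
  ∑' n : ℕ, |a n - b n| / (Nat.factorial (n + 1) : ℝ)

lemma binary_abs_le {a : ℕ → ℝ} (ha : IsBinary a) (n : ℕ) : |a n| ≤ 1 := by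
  rcases ha n with h | h <;> rw [h] <;> norm_num

lemma summable_term {a : ℕ → ℝ} (ha : IsBinary a) (x : ℝ) :
    Summable (fun n : ℕ => a n / (Nat.factorial n : ℝ) * x ^ n) := by
  apply Summable.of_norm
  refine Summable.of_nonneg_of_le (fun n => norm_nonneg _) ?_
    (Real.summable_pow_div_factorial |x|)
  intro n
  have h1 : (0:ℝ) < (Nat.factorial n : ℝ) := by
    exact_mod_cast Nat.factorial_pos n
  rw [Real.norm_eq_abs, abs_mul, abs_div, abs_pow, Nat.abs_cast]
  calc |a n| / (Nat.factorial n : ℝ) * |x| ^ n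
      ≤ 1 / (Nat.factorial n : ℝ) * |x| ^ n := by
        gcongr
        exact binary_abs_le ha n
    _ = |x| ^ n / (Nat.factorial n : ℝ) := by ring

lemma fseq_abs_le {a : ℕ → ℝ} (ha : IsBinary a) {x γ : ℝ} (hx : x ∈ Icc 0 γ) :
    |fseq a x| ≤ ∑' n : ℕ, γ ^ n / (Nat.factorial n : ℝ) := by
  obtain ⟨hx0, hxγ⟩ := hx
  have hsum := summable_term ha x
  have hnorm : Summable (fun n : ℕ => ‖a n / (Nat.factorial n : ℝ) * x ^ n‖) :=
    hsum.abs
  calc |fseq a x| ≤ ∑' n : ℕ, ‖a n / (Nat.factorial n : ℝ) * x ^ n‖ := by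
        rw [fseq, ← Real.norm_eq_abs]
        exact norm_tsum_le_tsum_norm hnorm
    _ ≤ ∑' n : ℕ, γ ^ n / (Nat.factorial n : ℝ) := by
        refine Summable.tsum_le_tsum ?_ hnorm (Real.summable_pow_div_factorial γ)
        intro n
        have h1 : (0:ℝ) < (Nat.factorial n : ℝ) := by
          exact_mod_cast Nat.factorial_pos n
        rw [Real.norm_eq_abs, abs_mul, abs_div, abs_pow, Nat.abs_cast]
        calc |a n| / (Nat.factorial n : ℝ) * |x| ^ n
            ≤ 1 / (Nat.factorial n : ℝ) * γ ^ n := by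
              gcongr
              · exact binary_abs_le ha n
              · rw [abs_of_nonneg hx0]; exact hxγ
          _ = γ ^ n / (Nat.factorial n : ℝ) := by ring

/-- Key pointwise lower bound near 0. -/
lemma pointwise_lb {a b : ℕ → ℝ} (ha : IsBinary a) (hb : IsBinary b) (m : ℕ)
    (hm : ∀ n < m, a n = b n) (hne : a m ≠ b m) {x : ℝ} (hx0 : 0 ≤ x) (hx8 : x ≤ 1/8) :
    x ^ m / (2 * (Nat.factorial m : ℝ)) ≤ |fseq a x - fseq b x| := by
  have hfm : (0:ℝ) < (Nat.factorial m : ℝ) := by exact_mod_cast Nat.factorial_pos m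
  set h : ℕ → ℝ := fun n => (a n - b n) / (Nat.factorial n : ℝ) * x ^ n with hh
  have hsa := summable_term ha x
  have hsb := summable_term hb x
  have hsc : Summable h := by
    have := hsa.sub hsb
    refine this.congr fun n => ?_
    simp only [hh]; ring
  have hdiff : fseq a x - fseq b x = ∑' n, h n := by
    rw [fseq, fseq, ← Summable.tsum_sub hsa hsb]
    refine tsum_congr fun n => ?_
    simp only [hh]; ring
  -- split off the first m+1 terms
  have hsplit : (∑ i ∈ Finset.range (m+1), h i) + ∑' i, h (i + (m+1)) = ∑' n, h n :=
    Summable.sum_add_tsum_nat_add (m+1) hsc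
  have hfin : (∑ i ∈ Finset.range (m+1), h i) = (a m - b m) / (Nat.factorial m : ℝ) * x ^ m := by
    rw [Finset.sum_eq_single m]
    · intro n hn hnm
      have hlt : n < m := lt_of_le_of_ne (Nat.lt_succ_iff.mp (Finset.mem_range.mp hn)) hnm
      simp [hh, hm n hlt]
    · intro hmem; exact absurd (Finset.self_mem_range_succ m) hmem
  have habm : |a m - b m| = 1 := by
    rcases ha m with h1 | h1 <;> rcases hb m with h2 | h2 <;>
      simp [h1, h2] at hne ⊢
  -- tail bound
  have hgeo : Summable (fun i : ℕ => x ^ (m+1) / (Nat.factorial (m+1) : ℝ) * (1/8) ^ i) :=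
    (summable_geometric_of_lt_one (by norm_num) (by norm_num)).mul_left _
  have htailterm : ∀ i : ℕ, |h (i + (m+1))| ≤
      x ^ (m+1) / (Nat.factorial (m+1) : ℝ) * (1/8 : ℝ) ^ i := by
    intro i
    have hfact : ((Nat.factorial (m+1) : ℝ) * (Nat.factorial i : ℝ)) ≤
        (Nat.factorial (i + (m+1)) : ℝ) := by
      have := Nat.factorial_mul_factorial_dvd_factorial_add (m+1) i
      have hle := Nat.le_of_dvd (Nat.factorial_pos _) this
      rw [Nat.add_comm (m+1) i] at hle
      exact_mod_cast hle
    have hfpos : (0:ℝ) < (Nat.factorial (i + (m+1)) : ℝ) := by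
      exact_mod_cast Nat.factorial_pos _
    have hfi : (1:ℝ) ≤ (Nat.factorial i : ℝ) := by
      exact_mod_cast Nat.one_le_iff_ne_zero.mpr (Nat.factorial_pos i).ne'
    have hab : |a (i + (m+1)) - b (i + (m+1))| ≤ 1 := by
      rcases ha (i + (m+1)) with h1 | h1 <;> rcases hb (i + (m+1)) with h2 | h2 <;>
        simp [h1, h2]
    have hfm1 : (0:ℝ) < (Nat.factorial (m+1) : ℝ) := by
      exact_mod_cast Nat.factorial_pos (m+1)
    calc |h (i + (m+1))|
        = |a (i + (m+1)) - b (i + (m+1))| / (Nat.factorial (i + (m+1)) : ℝ)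
            * x ^ (i + (m+1)) := by
          rw [hh]
          rw [abs_mul, abs_div, abs_pow, abs_of_nonneg hx0, Nat.abs_cast]
      _ ≤ 1 / ((Nat.factorial (m+1) : ℝ) * (Nat.factorial i : ℝ)) * x ^ (i + (m+1)) := by
          have hpos : (0:ℝ) < (Nat.factorial (m+1) : ℝ) * (Nat.factorial i : ℝ) := by
            positivity
          gcongr
      _ ≤ 1 / ((Nat.factorial (m+1) : ℝ) * 1) * (x ^ (m+1) * (1/8) ^ i) := by
          have hx8' : x ^ i ≤ (1/8 : ℝ) ^ i := pow_le_pow_left₀ hx0 hx8 i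
          have : x ^ (i + (m+1)) = x ^ (m+1) * x ^ i := by rw [pow_add]; ring
          rw [this]
          gcongr
      _ = x ^ (m+1) / (Nat.factorial (m+1) : ℝ) * (1/8 : ℝ) ^ i := by ring
  have hsumtail : Summable (fun i => |h (i + (m+1))|) :=
    Summable.of_nonneg_of_le (fun i => abs_nonneg _) htailterm hgeo
  have hfm1 : (0:ℝ) < (Nat.factorial (m+1) : ℝ) := by
    exact_mod_cast Nat.factorial_pos (m+1)
  have htail : |∑' i, h (i + (m+1))| ≤ x ^ (m+1) / (Nat.factorial (m+1) : ℝ) * (8/7) := by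
    calc |∑' i, h (i + (m+1))| ≤ ∑' i, |h (i + (m+1))| := by
          rw [← Real.norm_eq_abs]
          exact norm_tsum_le_tsum_norm (by simpa [Real.norm_eq_abs] using hsumtail)
      _ ≤ ∑' i, x ^ (m+1) / (Nat.factorial (m+1) : ℝ) * (1/8 : ℝ) ^ i :=
          Summable.tsum_le_tsum htailterm hsumtail hgeo
      _ = x ^ (m+1) / (Nat.factorial (m+1) : ℝ) * (1 - 1/8 : ℝ)⁻¹ := by
          rw [tsum_mul_left, tsum_geometric_of_lt_one (by norm_num) (by norm_num)]
      _ = x ^ (m+1) / (Nat.factorial (m+1) : ℝ) * (8/7) := by norm_num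
  have hcast : ((Nat.factorial (m+1) : ℝ)) = (m + 1 : ℝ) * (Nat.factorial m : ℝ) := by
    rw [Nat.factorial_succ]; push_cast; ring
  have htail2 : |∑' i, h (i + (m+1))| ≤ x ^ m / (2 * (Nat.factorial m : ℝ)) := by
    refine htail.trans ?_
    have hm1 : (1:ℝ) ≤ (m:ℝ) + 1 := by
      have : (0:ℝ) ≤ (m:ℝ) := Nat.cast_nonneg m
      linarith
    calc x ^ (m+1) / (Nat.factorial (m+1) : ℝ) * (8/7)
        = x ^ m * x * (8/7) / (((m:ℝ) + 1) * (Nat.factorial m : ℝ)) := by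
          rw [hcast, pow_succ]; ring
      _ ≤ x ^ m * (1/8) * (8/7) / (1 * (Nat.factorial m : ℝ)) := by
          gcongr
      _ = x ^ m / (7 * (Nat.factorial m : ℝ)) := by ring
      _ ≤ x ^ m / (2 * (Nat.factorial m : ℝ)) := by
          gcongr
          norm_num
  have h1 : |(a m - b m) / (Nat.factorial m : ℝ) * x ^ m| = x ^ m / (Nat.factorial m : ℝ) := by
    rw [abs_mul, abs_div, habm, abs_pow, abs_of_nonneg hx0, Nat.abs_cast]; ring
  have hineq : x ^ m / (Nat.factorial m : ℝ) - |∑' i, h (i + (m+1))|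
      ≤ |fseq a x - fseq b x| := by
    rw [hdiff, ← hsplit, hfin]
    have := abs_add_le ((a m - b m) / (Nat.factorial m : ℝ) * x ^ m + ∑' i, h (i + (m+1)))
      (-(∑' i, h (i + (m+1))))
    simp only [add_neg_cancel_right, abs_neg] at this
    linarith [h1 ▸ this]
  have hhalf : x ^ m / (2 * (Nat.factorial m : ℝ)) ≤
      x ^ m / (Nat.factorial m : ℝ) - x ^ m / (2 * (Nat.factorial m : ℝ)) := by
    rw [div_sub_div _ _ (ne_of_gt hfm) (by positivity : (2 * (Nat.factorial m : ℝ)) ≠ 0)]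
    rw [div_le_div_iff₀ (by positivity) (by positivity)]
    ring_nf
    nlinarith [pow_nonneg hx0 m, hfm]
  linarith

/-- Lower bound on the L¹ distance when the first disagreement is at index `m`. -/
lemma rho_lb (γ : ℝ) (hγ : 0 < γ) {a b : ℕ → ℝ} (ha : IsBinary a) (hb : IsBinary b)
    (m : ℕ) (hm : ∀ n < m, a n = b n) (hne : a m ≠ b m) :
    ((min γ (1/8)) / 2) ^ (m+1) / (2 * (Nat.factorial m : ℝ))
      ≤ rho 0 γ 1 (fseq a) (fseq b) := by
  have hfm : (0:ℝ) < (Nat.factorial m : ℝ) := by exact_mod_cast Nat.factorial_pos m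
  set x₀ := min γ (1/8) with hx₀def
  have hx₀pos : 0 < x₀ := lt_min hγ (by norm_num)
  have hx₀8 : x₀ ≤ 1/8 := min_le_right _ _
  have hx₀γ : x₀ ≤ γ := min_le_left _ _
  set C : ℝ := (x₀/2) ^ m / (2 * (Nat.factorial m : ℝ)) with hC
  have hCpos : 0 < C := by positivity
  have hsub : Icc (x₀/2) x₀ ⊆ Icc 0 γ := Icc_subset_Icc (by linarith) hx₀γ
  have hpoint : ∀ x ∈ Icc (x₀/2) x₀,
      ENNReal.ofReal C ≤ (‖fseq a x - fseq b x‖₊ : ℝ≥0∞) := by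
    intro x hx
    obtain ⟨hx1, hx2⟩ := hx
    have hx0 : 0 ≤ x := le_trans (by linarith) hx1
    have hx8 : x ≤ 1/8 := le_trans hx2 hx₀8
    have hCle : C ≤ |fseq a x - fseq b x| := by
      refine le_trans ?_ (pointwise_lb ha hb m hm hne hx0 hx8)
      rw [hC]
      gcongr
    rw [← enorm_eq_nnnorm, ← ofReal_norm, Real.norm_eq_abs]
    exact ENNReal.ofReal_le_ofReal hCle
  have key : ENNReal.ofReal C * ENNReal.ofReal (x₀/2)
      ≤ eLpNorm (fun x => fseq a x - fseq b x) 1 (volume.restrict (Icc 0 γ)) := by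
    rw [eLpNorm_one_eq_lintegral_enorm]
    simp only [enorm_eq_nnnorm]
    have hind : ∀ x, (Icc (x₀/2) x₀).indicator (fun _ => ENNReal.ofReal C) x
        ≤ (‖fseq a x - fseq b x‖₊ : ℝ≥0∞) := by
      intro x
      by_cases hx : x ∈ Icc (x₀/2) x₀
      · rw [Set.indicator_of_mem hx]; exact hpoint x hx
      · rw [Set.indicator_of_notMem hx]; exact zero_le
    calc ENNReal.ofReal C * ENNReal.ofReal (x₀/2)
        = ENNReal.ofReal C * (volume.restrict (Icc 0 γ)) (Icc (x₀/2) x₀) := by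
          rw [Measure.restrict_apply measurableSet_Icc, Set.inter_eq_left.mpr hsub,
            Real.volume_Icc]
          congr 1
          ring_nf
      _ = ∫⁻ x, (Icc (x₀/2) x₀).indicator (fun _ => ENNReal.ofReal C) x
            ∂(volume.restrict (Icc 0 γ)) :=
          (lintegral_indicator_const measurableSet_Icc _).symm
      _ ≤ ∫⁻ x, (‖fseq a x - fseq b x‖₊ : ℝ≥0∞) ∂(volume.restrict (Icc 0 γ)) :=
          lintegral_mono hind
  have hfin : eLpNorm (fun x => fseq a x - fseq b x) 1 (volume.restrict (Icc 0 γ)) ≠ ⊤ := by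
    have hbound : ∀ᵐ x ∂(volume.restrict (Icc 0 γ)),
        ‖fseq a x - fseq b x‖ ≤ 2 * ∑' n : ℕ, γ ^ n / (Nat.factorial n : ℝ) := by
      refine ae_restrict_of_forall_mem measurableSet_Icc ?_
      intro x hx
      have h1 := fseq_abs_le ha hx
      have h2 := fseq_abs_le hb hx
      rw [Real.norm_eq_abs]
      calc |fseq a x - fseq b x| ≤ |fseq a x| + |fseq b x| := abs_sub _ _
        _ ≤ 2 * ∑' n : ℕ, γ ^ n / (Nat.factorial n : ℝ) := by linarith
    refine ne_top_of_le_ne_top ?_ (eLpNorm_le_of_ae_bound hbound)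
    apply ENNReal.mul_ne_top
    · simp only [ENNReal.toReal_one, inv_one, ENNReal.rpow_one]
      rw [Measure.restrict_apply_univ, Real.volume_Icc]
      exact ENNReal.ofReal_ne_top
    · exact ENNReal.ofReal_ne_top
  have hmono := ENNReal.toReal_mono hfin key
  rw [rho]
  refine le_trans ?_ hmono
  rw [← ENNReal.ofReal_mul hCpos.le, ENNReal.toReal_ofReal (by positivity)]
  apply le_of_eq
  rw [hC, pow_succ]
  ring

/-- Fix `γ > 0`. For every `ε > 0` and every `f ∈ E` there is a
`δ > 0` such that every `g ∈ E` with `ρ_1(f, g) < δ` satisfies `d_E(f, g) < ε`: the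
identity map `(E, ρ_1) → (E, d_E)` is continuous. -/
theorem stmt15 (γ : ℝ) (hγ : 0 < γ) :
    ∀ ε > (0 : ℝ), ∀ a : ℕ → ℝ, IsBinary a →
      ∃ δ > (0 : ℝ), ∀ b : ℕ → ℝ, IsBinary b →
        rho 0 γ 1 (fseq a) (fseq b) < δ → dE a b < ε := by
  intro ε hε a ha
  have hsum1 : Summable (fun n : ℕ => (1:ℝ) / (Nat.factorial (n+1) : ℝ)) := by
    refine Summable.of_nonneg_of_le (fun n => by positivity) (fun n => ?_)
      (Real.summable_pow_div_factorial 1)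
    simp only [one_pow]
    gcongr
    exact Nat.le_succ n
  obtain ⟨N, hN⟩ : ∃ N : ℕ, (∑' k : ℕ, (1:ℝ) / (Nat.factorial (k + N + 1) : ℝ)) < ε := by
    have ht := tendsto_sum_nat_add (f := fun n : ℕ => (1:ℝ) / (Nat.factorial (n+1) : ℝ))
    exact (ht.eventually (gt_mem_nhds hε)).exists
  set x₀ := min γ (1/8) with hx₀def
  have hx₀pos : 0 < x₀ := lt_min hγ (by norm_num)
  have hfN : (0:ℝ) < (Nat.factorial N : ℝ) := by exact_mod_cast Nat.factorial_pos N
  refine ⟨(x₀/2) ^ (N+1) / (2 * (Nat.factorial N : ℝ)), by positivity, ?_⟩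
  intro b hb hrho
  by_cases hagree : ∀ n < N, a n = b n
  · have hterm : Summable (fun n : ℕ => |a n - b n| / (Nat.factorial (n+1) : ℝ)) := by
      refine Summable.of_nonneg_of_le (fun n => by positivity) (fun n => ?_) hsum1
      have hfp : (0:ℝ) < (Nat.factorial (n+1) : ℝ) := by
        exact_mod_cast Nat.factorial_pos (n+1)
      gcongr
      rcases ha n with h1 | h1 <;> rcases hb n with h2 | h2 <;> simp [h1, h2]
    have hsplit := Summable.sum_add_tsum_nat_add
      (f := fun n : ℕ => |a n - b n| / (Nat.factorial (n+1) : ℝ)) N hterm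
    rw [dE, ← hsplit]
    have hzero : (∑ i ∈ Finset.range N, |a i - b i| / (Nat.factorial (i+1) : ℝ)) = 0 :=
      Finset.sum_eq_zero fun i hi => by simp [hagree i (Finset.mem_range.mp hi)]
    rw [hzero, zero_add]
    have hshift : Summable (fun k : ℕ => |a (k + N) - b (k + N)| /
        (Nat.factorial (k + N + 1) : ℝ)) :=
      (summable_nat_add_iff (f := fun n : ℕ => |a n - b n| / (Nat.factorial (n+1) : ℝ)) N).mpr
        hterm
    have hshift1 : Summable (fun k : ℕ => (1:ℝ) / (Nat.factorial (k + N + 1) : ℝ)) :=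
      (summable_nat_add_iff (f := fun n : ℕ => (1:ℝ) / (Nat.factorial (n+1) : ℝ)) N).mpr hsum1
    calc (∑' k : ℕ, |a (k + N) - b (k + N)| / (Nat.factorial (k + N + 1) : ℝ))
        ≤ ∑' k : ℕ, (1:ℝ) / (Nat.factorial (k + N + 1) : ℝ) := by
          refine Summable.tsum_le_tsum (fun k => ?_) hshift hshift1
          have hfp : (0:ℝ) < (Nat.factorial (k + N + 1) : ℝ) := by
            exact_mod_cast Nat.factorial_pos (k + N + 1)
          gcongr
          rcases ha (k + N) with h1 | h1 <;> rcases hb (k + N) with h2 | h2 <;>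
            simp [h1, h2]
      _ < ε := hN
  · push_neg at hagree
    obtain ⟨n₀, hn₀N, hn₀⟩ := hagree
    obtain ⟨m, hmem, hmin⟩ := Nat.lt_wfRel.wf.has_min {n | a n ≠ b n} ⟨n₀, hn₀⟩
    have hmne : a m ≠ b m := hmem
    have hmmin : ∀ k < m, a k = b k := fun k hk =>
      not_not.mp (fun h => hmin k h hk)
    have hmN : m < N := lt_of_le_of_lt (not_lt.mp (hmin n₀ hn₀)) hn₀N
    have hlb := rho_lb γ hγ ha hb m hmmin hmne
    have hfm : (0:ℝ) < (Nat.factorial m : ℝ) := by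
      exact_mod_cast Nat.factorial_pos _
    have hδle : (x₀/2) ^ (N+1) / (2 * (Nat.factorial N : ℝ))
        ≤ (x₀/2) ^ (m + 1) / (2 * (Nat.factorial (m) : ℝ)) := by
      have h1 : (x₀/2 : ℝ) ≤ 1 := by
        have : x₀ ≤ 1/8 := min_le_right _ _
        linarith
      have h2 : (0:ℝ) ≤ x₀/2 := by linarith
      have hnum : (x₀/2) ^ (N+1) ≤ (x₀/2) ^ (m + 1) :=
        pow_le_pow_of_le_one h2 h1 (by omega)
      have hden : (2 * (Nat.factorial (m) : ℝ)) ≤ 2 * (Nat.factorial N : ℝ) := by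
        have : (Nat.factorial (m) : ℝ) ≤ (Nat.factorial N : ℝ) := by
          exact_mod_cast Nat.factorial_le hmN.le
        linarith
      gcongr
    exact absurd hrho (not_lt.mpr (le_trans hδle hlb))
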